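/- If P is a pairwise-locally strongly connected poset that admits an R-grading for some totally ordered set R, then the antichain cutsets of P are exactly the level sets of the grading. -/

import Mathlib

/-- An antichain cutset: a set intersecting each maximal chain in exactly one element. -/
def IsAntichainCutset {α : Type*} [PartialOrder α] (A : Set α) : Prop :=
  ∀ c : Set α, IsMaxChain (· ≤ ·) c → ∃! x, x ∈ c ∧ x ∈ A

/-- A poset is strongly connected if any two maximal chains are connected by a finite
sequence of maximal chains in which consecutive chains have symmetric difference of
cardinality two. -/
def StronglyConnectedOrder (α : Type*) [PartialOrder α] : Prop :=
  ∀ c d : Set α, IsMaxChain (· ≤ ·) c → IsMaxChain (· ≤ ·) d →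
    ∃ (n : ℕ) (f : ℕ → Set α), f 0 = c ∧ f n = d ∧
      (∀ i ≤ n, IsMaxChain (· ≤ ·) (f i)) ∧
      ∀ i < n, (symmDiff (f i) (f (i + 1))).ncard = 2

/-- An R-grading: a map restricting to an order isomorphism onto R on each maximal chain. -/
def IsRGrading {α R : Type*} [PartialOrder α] [LinearOrder R] (ρ : α → R) : Prop :=
  ∀ c : Set α, IsMaxChain (· ≤ ·) c →
    (∀ x ∈ c, ∀ y ∈ c, x ≤ y ↔ ρ x ≤ ρ y) ∧ ∀ r : R, ∃ x ∈ c, ρ x = r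

section Aux

variable {α R : Type*} [PartialOrder α] [LinearOrder R]

/-- A maximal chain contains every element comparable to all its elements. -/
lemma ACS.mem_of_comparable {β : Type*} {r : β → β → Prop} {C : Set β}
    (hC : IsMaxChain r C) {z : β} (h : ∀ w ∈ C, z ≠ w → r z w ∨ r w z) : z ∈ C := by
  have h' : IsChain r (insert z C) := hC.1.insert h
  have := hC.2 h' (Set.subset_insert _ _)
  rw [this]; exact Set.mem_insert _ _

/-- On a maximal chain the grading is injective. -/
lemma ACS.grade_inj {ρ : α → R} (hρ : IsRGrading ρ) {C : Set α}
    (hC : IsMaxChain (· ≤ ·) C) {x y : α} (hx : x ∈ C) (hy : y ∈ C)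
    (hxy : ρ x = ρ y) : x = y := by
  obtain ⟨hiso, -⟩ := hρ C hC
  exact le_antisymm ((hiso x hx y hy).2 hxy.le) ((hiso y hy x hx).2 hxy.ge)

/-- Key lemma: two maximal chains at symmetric-difference distance two meet an
antichain cutset at points of the same grade. -/
lemma ACS.key {A : Set α} (hA : IsAntichainCutset A) {ρ : α → R} (hρ : IsRGrading ρ)
    {C D : Set α} (hC : IsMaxChain (· ≤ ·) C) (hD : IsMaxChain (· ≤ ·) D)
    (h2 : (symmDiff C D).ncard = 2) {x y : α} (hx : x ∈ C ∧ x ∈ A) (hy : y ∈ D ∧ y ∈ A) :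
    ρ x = ρ y := by
  by_cases hxD : x ∈ D
  · obtain ⟨z, hz, hz!⟩ := hA D hD
    have e1 : x = z := hz! x ⟨hxD, hx.2⟩
    have e2 : y = z := hz! y hy
    rw [e1, e2]
  · -- x ∈ C \ D
    have hyC : y ∉ C := by
      intro hyC
      obtain ⟨z, hz, hz!⟩ := hA C hC
      have e1 : x = z := hz! x hx
      have e2 : y = z := hz! y ⟨hyC, hy.2⟩
      exact hxD (e1.trans e2.symm ▸ hy.1)
    obtain ⟨-, hsurj⟩ := hρ D hD
    obtain ⟨w, hwD, hw⟩ := hsurj (ρ x)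
    have hwC : w ∉ C := by
      intro hwC
      exact hxD (ACS.grade_inj hρ hC hwC hx.1 hw ▸ hwD)
    -- x, w, y all lie in the symmetric difference
    rw [Set.ncard_eq_two] at h2
    obtain ⟨p, q, hpq, hset⟩ := h2
    have mx : x ∈ ({p, q} : Set α) := by
      rw [← hset, Set.mem_symmDiff]; exact Or.inl ⟨hx.1, hxD⟩
    have mw : w ∈ ({p, q} : Set α) := by
      rw [← hset, Set.mem_symmDiff]; exact Or.inr ⟨hwD, hwC⟩
    have my : y ∈ ({p, q} : Set α) := by
      rw [← hset, Set.mem_symmDiff]; exact Or.inr ⟨hy.1, hyC⟩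
    have hwy : w = y := by
      have hxw : x ≠ w := fun e => hxD (e ▸ hwD)
      have hxy : x ≠ y := fun e => hxD (e ▸ hy.1)
      simp only [Set.mem_insert_iff, Set.mem_singleton_iff] at mx mw my
      rcases mx with rfl | rfl <;> rcases mw with rfl | rfl <;> rcases my with rfl | rfl <;>
        first | rfl | (exact absurd rfl hxw) | (exact absurd rfl hxy)
    rw [← hwy, hw]

/-- Any maximal chain of an interval extends to a maximal chain of the ambient poset
whose trace on the interval is the given chain. -/
lemma ACS.extend {a b : α} {c' : Set (Set.Icc a b)} (hc' : IsMaxChain (· ≤ ·) c') :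
    ∃ C : Set α, IsMaxChain (· ≤ ·) C ∧ C ∩ Set.Icc a b = Subtype.val '' c' := by
  have himg : IsChain (· ≤ ·) (Subtype.val '' c') :=
    IsChain.image_of_map_rel (· ≤ ·) (· ≤ ·) Subtype.val (fun _ _ h => h) hc'.1
  obtain ⟨C, hC, hsub⟩ := himg.exists_maxChain
  refine ⟨C, hC, ?_⟩
  apply Set.Subset.antisymm
  · rintro z ⟨hzC, hzI⟩
    have ht : IsChain (· ≤ ·) ((Subtype.val : Set.Icc a b → α) ⁻¹' C) := by
      intro u hu v hv huv
      exact (hC.1 hu hv (fun e => huv (Subtype.coe_injective e))).imp id id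
    have hsub' : c' ⊆ (Subtype.val : Set.Icc a b → α) ⁻¹' C := fun u hu =>
      hsub ⟨u, hu, rfl⟩
    have := hc'.2 ht hsub'
    exact ⟨⟨z, hzI⟩, this ▸ hzC, rfl⟩
  · exact fun z hz => ⟨hsub hz, by obtain ⟨u, -, rfl⟩ := hz; exact u.2⟩

/-- Every maximal chain of `Icc a b` contains the endpoints. -/
lemma ACS.endpoints_mem {a b : α} (hab : a ≤ b) {c' : Set (Set.Icc a b)}
    (hc' : IsMaxChain (· ≤ ·) c') :
    (⟨a, le_refl a, hab⟩ : Set.Icc a b) ∈ c' ∧ (⟨b, hab, le_refl b⟩ : Set.Icc a b) ∈ c' := by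
  constructor
  · exact ACS.mem_of_comparable hc' fun w _ _ => Or.inl w.2.1
  · exact ACS.mem_of_comparable hc' fun w _ _ => Or.inr w.2.2

/-- Replacing the trace of a maximal chain on an interval by another maximal chain of
the interval. -/
lemma ACS.replace {a b : α} (hab : a ≤ b) {C : Set α} (hC : IsMaxChain (· ≤ ·) C)
    {c' d' : Set (Set.Icc a b)} (hc' : IsMaxChain (· ≤ ·) c') (hd' : IsMaxChain (· ≤ ·) d')
    (hCI : C ∩ Set.Icc a b = Subtype.val '' c') :
    IsMaxChain (· ≤ ·) ((C \ Set.Icc a b) ∪ Subtype.val '' d') ∧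
    ((C \ Set.Icc a b) ∪ Subtype.val '' d') ∩ Set.Icc a b = Subtype.val '' d' ∧
    symmDiff C ((C \ Set.Icc a b) ∪ Subtype.val '' d') = Subtype.val '' (symmDiff c' d') := by
  have hNI : Subtype.val '' d' ⊆ Set.Icc a b := by rintro z ⟨u, -, rfl⟩; exact u.2
  have hMI : Subtype.val '' c' ⊆ Set.Icc a b := by rintro z ⟨u, -, rfl⟩; exact u.2
  have hMC : Subtype.val '' c' ⊆ C := by rw [← hCI]; exact Set.inter_subset_left
  have haN : a ∈ Subtype.val '' d' := ⟨_, (ACS.endpoints_mem hab hd').1, rfl⟩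
  have hbN : b ∈ Subtype.val '' d' := ⟨_, (ACS.endpoints_mem hab hd').2, rfl⟩
  have haC : a ∈ C := hMC ⟨_, (ACS.endpoints_mem hab hc').1, rfl⟩
  have hbC : b ∈ C := hMC ⟨_, (ACS.endpoints_mem hab hc').2, rfl⟩
  -- elements of C outside the interval are below a or above b
  have hout : ∀ z ∈ C \ Set.Icc a b, z ≤ a ∨ b ≤ z := by
    rintro z ⟨hzC, hzI⟩
    rcases hC.1.total hzC haC with h1 | h1
    · exact Or.inl h1
    · rcases hC.1.total hzC hbC with h2 | h2
      · exact absurd ⟨h1, h2⟩ hzI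
      · exact Or.inr h2
  -- the new set is a chain
  have hDchain : IsChain (· ≤ ·) ((C \ Set.Icc a b) ∪ Subtype.val '' d') := by
    have hNchain : IsChain (· ≤ ·) (Subtype.val '' d') :=
      IsChain.image_of_map_rel (· ≤ ·) (· ≤ ·) Subtype.val (fun _ _ h => h) hd'.1
    intro z hz w hw hzw
    rcases hz with hz | hz <;> rcases hw with hw | hw
    · exact hC.1 hz.1 hw.1 hzw
    · rcases hout z hz with h1 | h1
      · exact Or.inl (h1.trans (hNI hw).1)
      · exact Or.inr ((hNI hw).2.trans h1)
    · rcases hout w hw with h1 | h1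
      · exact Or.inr (h1.trans (hNI hz).1)
      · exact Or.inl ((hNI hz).2.trans h1)
    · exact hNchain hz hw hzw
  -- it is a maximal chain
  have hDmax : IsMaxChain (· ≤ ·) ((C \ Set.Icc a b) ∪ Subtype.val '' d') := by
    refine ⟨hDchain, fun t ht hsub => Set.Subset.antisymm hsub fun z hz => ?_⟩
    have hcomp : ∀ w ∈ (C \ Set.Icc a b) ∪ Subtype.val '' d', z ≠ w → z ≤ w ∨ w ≤ z :=
      fun w hw hne => ht hz (hsub hw) hne
    by_cases hzI : z ∈ Set.Icc a b
    · refine Or.inr ?_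
      have hmem : (⟨z, hzI⟩ : Set.Icc a b) ∈ d' := by
        apply ACS.mem_of_comparable hd'
        intro w hw hne
        have hne' : z ≠ ↑w := fun e => hne (Subtype.coe_injective e)
        exact hcomp ↑w (Or.inr ⟨w, hw, rfl⟩) hne'
      exact ⟨⟨z, hzI⟩, hmem, rfl⟩
    · refine Or.inl ⟨?_, hzI⟩
      apply ACS.mem_of_comparable hC
      intro w hwC hne
      by_cases hwI : w ∈ Set.Icc a b
      · have hza : z ≤ a ∨ a ≤ z := by
          rcases eq_or_ne z a with rfl | hne'
          · exact Or.inl le_rfl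
          · exact hcomp a (Or.inr haN) hne'
        have hzb : z ≤ b ∨ b ≤ z := by
          rcases eq_or_ne z b with rfl | hne'
          · exact Or.inl le_rfl
          · exact hcomp b (Or.inr hbN) hne'
        rcases hza with h1 | h1
        · exact Or.inl (h1.trans hwI.1)
        · rcases hzb with h2 | h2
          · exact absurd ⟨h1, h2⟩ hzI
          · exact Or.inr (hwI.2.trans h2)
      · exact hcomp w (Or.inl ⟨hwC, hwI⟩) hne
  refine ⟨hDmax, ?_, ?_⟩
  · apply Set.Subset.antisymm
    · rintro z ⟨hz | hz, hzI⟩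
      · exact absurd hzI hz.2
      · exact hz
    · exact fun z hz => ⟨Or.inr hz, hNI hz⟩
  · -- the symmetric difference
    have e1 : symmDiff C ((C \ Set.Icc a b) ∪ Subtype.val '' d')
        = symmDiff (Subtype.val '' c') (Subtype.val '' d') := by
      rw [Set.symmDiff_def, Set.symmDiff_def]
      ext z
      simp only [Set.mem_union, Set.mem_diff]
      constructor
      · rintro (⟨h1, h2⟩ | ⟨h1 | h1, h2⟩)
        · push_neg at h2
          have hzI : z ∈ Set.Icc a b := h2.1 h1
          have hmem : z ∈ Subtype.val '' c' := by rw [← hCI]; exact ⟨h1, hzI⟩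
          exact Or.inl ⟨hmem, h2.2⟩
        · exact absurd h1.1 h2
        · exact Or.inr ⟨h1, fun hM => h2 (hMC hM)⟩
      · rintro (⟨h1, h2⟩ | ⟨h1, h2⟩)
        · refine Or.inl ⟨hMC h1, ?_⟩
          rintro (hc | hn)
          · exact hc.2 (hMI h1)
          · exact h2 hn
        · refine Or.inr ⟨Or.inr h1, fun hzC => ?_⟩
          have hmem : z ∈ Subtype.val '' c' := by rw [← hCI]; exact ⟨hzC, hNI h1⟩
          exact h2 hmem
    rw [e1, Set.symmDiff_def, Set.symmDiff_def, Set.image_union,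
      Set.image_diff Subtype.coe_injective, Set.image_diff Subtype.coe_injective]

/-- Main lemma: membership in an antichain cutset only depends on the grade. -/
lemma ACS.main {A : Set α} (hA : IsAntichainCutset A) {ρ : α → R} (hρ : IsRGrading ρ)
    (h : ∀ x y : α, ∃ a b : α, x ∈ Set.Icc a b ∧ y ∈ Set.Icc a b ∧
      StronglyConnectedOrder (Set.Icc a b))
    {u v : α} (hu : u ∈ A) (huv : ρ v = ρ u) : v ∈ A := by
  obtain ⟨a, b, hu', hv', hsc⟩ := h u v
  have hab : a ≤ b := hu'.1.trans hu'.2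
  obtain ⟨c', hc', hc'u⟩ := (IsChain.singleton (a := (⟨u, hu'⟩ : Set.Icc a b))).exists_maxChain
  obtain ⟨d', hd', hd'v⟩ := (IsChain.singleton (a := (⟨v, hv'⟩ : Set.Icc a b))).exists_maxChain
  obtain ⟨n, f, hf0, hfn, hmax, hsd⟩ := hsc c' d' hc' hd'
  have hind : ∀ i, i ≤ n → ∃ C : Set α, IsMaxChain (· ≤ ·) C ∧
      C ∩ Set.Icc a b = Subtype.val '' (f i) ∧ ∀ x, x ∈ C → x ∈ A → ρ x = ρ u := by
    intro i
    induction i with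
    | zero =>
      intro _
      obtain ⟨C, hC, hCI⟩ := ACS.extend (hmax 0 (Nat.zero_le n))
      refine ⟨C, hC, hCI, fun x hxC hxA => ?_⟩
      have huC : u ∈ C := by
        have : (u : α) ∈ Subtype.val '' (f 0) := ⟨⟨u, hu'⟩, hf0 ▸ hc'u rfl, rfl⟩
        rw [← hCI] at this; exact this.1
      obtain ⟨z, hz, hz!⟩ := hA C hC
      have e1 : x = z := hz! x ⟨hxC, hxA⟩
      have e2 : u = z := hz! u ⟨huC, hu⟩
      rw [e1, ← e2]
    | succ i ih =>
      intro hin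
      have hi : i ≤ n := Nat.le_of_succ_le hin
      obtain ⟨C, hC, hCI, hval⟩ := ih hi
      obtain ⟨hDmax, hDI, hDsd⟩ := ACS.replace hab hC (hmax i hi) (hmax (i + 1) hin) hCI
      set D := (C \ Set.Icc a b) ∪ Subtype.val '' (f (i + 1))
      have hsd2 : (symmDiff C D).ncard = 2 := by
        rw [hDsd, Set.ncard_image_of_injective _ Subtype.coe_injective]
        exact hsd i (Nat.lt_of_succ_le hin)
      refine ⟨D, hDmax, hDI, fun y hyD hyA => ?_⟩
      obtain ⟨x, hx, -⟩ := hA C hC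
      have : ρ x = ρ y := ACS.key hA hρ hC hDmax hsd2 hx ⟨hyD, hyA⟩
      rw [← this]
      exact hval x hx.1 hx.2
  obtain ⟨C, hC, hCI, hval⟩ := hind n le_rfl
  have hvC : v ∈ C := by
    have : (v : α) ∈ Subtype.val '' (f n) := ⟨⟨v, hv'⟩, hfn ▸ hd'v rfl, rfl⟩
    rw [← hCI] at this; exact this.1
  obtain ⟨w, hw, -⟩ := hA C hC
  have hwv : ρ w = ρ v := by rw [hval w hw.1 hw.2, huv]
  have : w = v := ACS.grade_inj hρ hC hw.1 hvC hwv
  exact this ▸ hw.2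

end Aux

/-- In a pairwise-locally strongly connected R-graded poset, the antichain cutsets are
exactly the (nonempty) level sets. -/
theorem antichain_cutsets_eq_level_sets {α R : Type*} [PartialOrder α] [LinearOrder R]
    (h : ∀ x y : α, ∃ a b : α, x ∈ Set.Icc a b ∧ y ∈ Set.Icc a b ∧
      StronglyConnectedOrder (Set.Icc a b))
    (ρ : α → R) (hρ : IsRGrading ρ) :
    ∀ A : Set α, IsAntichainCutset A ↔ ∃ r : R, A = {x | ρ x = r} ∧ A.Nonempty := by
  intro A
  constructor
  · intro hA
    obtain ⟨C₀, hC₀, -⟩ := (IsChain.empty (r := ((· ≤ ·) : α → α → Prop))).exists_maxChain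
    obtain ⟨x₀, hx₀, -⟩ := hA C₀ hC₀
    refine ⟨ρ x₀, ?_, ⟨x₀, hx₀.2⟩⟩
    apply Set.Subset.antisymm
    · intro y hy
      obtain ⟨D, hD, hsubD⟩ := (IsChain.singleton (a := y)).exists_maxChain
      have hyD : y ∈ D := hsubD rfl
      obtain ⟨-, hsurj⟩ := hρ D hD
      obtain ⟨z, hzD, hz⟩ := hsurj (ρ x₀)
      have hzA : z ∈ A := ACS.main hA hρ h hx₀.2 hz
      obtain ⟨w, hw, hw!⟩ := hA D hD
      have e1 : z = w := hw! z ⟨hzD, hzA⟩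
      have e2 : y = w := hw! y ⟨hyD, hy⟩
      show ρ y = ρ x₀
      rw [e2, ← e1, hz]
    · intro y hy
      exact ACS.main hA hρ h hx₀.2 hy
  · rintro ⟨r, rfl, hne⟩
    intro c hc
    obtain ⟨hiso, hsurj⟩ := hρ c hc
    obtain ⟨x, hxc, hx⟩ := hsurj r
    refine ⟨x, ⟨hxc, hx⟩, ?_⟩
    rintro y ⟨hyc, hy⟩
    have : ρ y = ρ x := by rw [hx]; exact hy
    exact le_antisymm ((hiso y hyc x hxc).2 this.le) ((hiso x hxc y hyc).2 this.ge)
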